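/- Suppose a block s belongs to a ℘-node A (A ∈ Q) in a colored P-process, and s^{(•)} is infinite. Then A has a green target: there exists a place g ∈ T(A) \ F such that ℘*(⋃A^{(•)}) ∩ g^{(•)} is uncountably infinite; in particular g is green. (Here one uses that |℘*(A^{(•)})| > ℵ₀ when some block of A is infinite, that ℘*(A^{(•)}) ⊆ ⋃P^{(•)} for ℘-nodes, that P is finite, and that red places are finite.) -/

import Mathlib

/-- The image of a ZF-set under an arbitrary function (classically definable). -/
noncomputable def zImage (f : ZFSet → ZFSet) (X : ZFSet) : ZFSet :=
  @ZFSet.image f (Classical.allZFSetDefinable fun s => f (s 0)) X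

/-- `℘*(X) = { Y : Y ⊆ ⋃X ∧ ∀ z ∈ X, z ∩ Y ≠ ∅ }` for ZF-sets. -/
def zPowast (X : ZFSet) : ZFSet :=
  ZFSet.sep (fun Y => ∀ z ∈ X, z ∩ Y ≠ ∅) (ZFSet.powerset (ZFSet.sUnion X))

/-- A formative process: to each place `q` in the ZF-set `P` of places and each
ordinal `μ ≤ xi` is assigned a block `blk q μ`, pairwise disjoint at each stage,
increasing at successors, continuous at limits, empty at `0` and nonempty at `xi`. -/
structure FormativeProcess where
  P : ZFSet
  xi : Ordinal
  blk : ZFSet → Ordinal → ZFSet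
  disj : ∀ p ∈ P, ∀ q ∈ P, p ≠ q → ∀ μ ≤ xi, blk p μ ∩ blk q μ = (∅ : ZFSet)
  mono : ∀ q ∈ P, ∀ ν < xi, blk q ν ⊆ blk q (ν + 1)
  limitc : ∀ q ∈ P, ∀ lam ≤ xi, Order.IsSuccLimit lam →
    ∀ x : ZFSet, x ∈ blk q lam ↔ ∃ ν < lam, x ∈ blk q ν
  init : ∀ q ∈ P, blk q 0 = (∅ : ZFSet)
  final_ne : ∀ q ∈ P, blk q xi ≠ (∅ : ZFSet)

/-- `⋃P^(ν)`, the union of all blocks at stage `ν`. -/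
noncomputable def FormativeProcess.stage (F : FormativeProcess) (ν : Ordinal) : ZFSet :=
  ZFSet.sUnion (zImage (fun q => F.blk q ν) F.P)

/-- `⋃A^(•)`, the union of the final blocks of the places in the node `A`. -/
noncomputable def FormativeProcess.nodeUnion (F : FormativeProcess) (A : ZFSet) : ZFSet :=
  ZFSet.sUnion (zImage (fun q => F.blk q F.xi) A)

open Classical in
/-- The grand event of a node `A`: the stage `ν < xi` at which `⋃A^(•)` appears,
if any exists, and `xi` otherwise. -/
noncomputable def FormativeProcess.GE (F : FormativeProcess) (A : ZFSet) : Ordinal :=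
  if h : ∃ ν, ν < F.xi ∧ F.nodeUnion A ∈ F.stage (ν + 1) ∧ F.nodeUnion A ∉ F.stage ν
  then h.choose else F.xi

theorem mem_zImage {f : ZFSet → ZFSet} {X y : ZFSet} :
    y ∈ zImage f X ↔ ∃ z ∈ X, f z = y :=
  @ZFSet.mem_image f (Classical.allZFSetDefinable fun s => f (s 0)) X y

theorem mem_zPowast {X Y : ZFSet} :
    Y ∈ zPowast X ↔ Y ∈ ZFSet.powerset (ZFSet.sUnion X) ∧ ∀ z ∈ X, z ∩ Y ≠ ∅ :=
  ZFSet.mem_sep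

/-- If a block `s` belonging to a ℘-node `A` becomes infinite in a colored process
(finite place set, red places have finite blocks, ℘-nodes satisfy
`℘*(A^(•)) ⊆ ⋃P^(•)`), then `A` has a green target: a place `g ∈ P` outside the red
set `Fred` such that `℘*(A^(•)) ∩ g^(•)` is uncountable (in particular nonempty, so
`g` is a target of `A`). -/
theorem green_target_of_infinite_block (F : FormativeProcess)
    (hPfin : F.P.toSet.Finite)
    (Fred : ZFSet) (hFred : ∀ q ∈ Fred, q ∈ F.P ∧ (F.blk q F.xi).toSet.Finite)
    (Q : Set ZFSet) (hQsub : ∀ B ∈ Q, B ⊆ F.P)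
    (hQpow : ∀ B ∈ Q, zPowast (zImage (fun q => F.blk q F.xi) B) ⊆ F.stage F.xi)
    (A : ZFSet) (hAQ : A ∈ Q) (s : ZFSet) (hs : s ∈ A)
    (hinf : (F.blk s F.xi).toSet.Infinite) :
    ∃ g : ZFSet, g ∈ F.P ∧ g ∉ Fred ∧
      (zPowast (zImage (fun q => F.blk q F.xi) A) ∩ F.blk g F.xi ≠ (∅ : ZFSet)) ∧
      ¬ (zPowast (zImage (fun q => F.blk q F.xi) A) ∩ F.blk g F.xi).toSet.Countable := by
  classical
  set f : ZFSet → ZFSet := fun q => F.blk q F.xi with hf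
  set X : ZFSet := zImage f A with hX
  set S : ZFSet := zPowast X with hSdef
  have hAP : A ⊆ F.P := hQsub A hAQ
  -- membership in X
  have hmemX : ∀ y : ZFSet, y ∈ X ↔ ∃ q ∈ A, f q = y := fun y =>
    mem_zImage
  have hsX : f s ∈ X := (hmemX _).2 ⟨s, hs, rfl⟩
  have hfs_sub : f s ⊆ ZFSet.sUnion X := fun t ht =>
    ZFSet.mem_sUnion_of_mem ht hsX
  -- the injection from nonempty subsets of (f s).toSet into S
  set r : Set ZFSet := (f s).toSet with hr
  let Φ : Set ZFSet → ZFSet := fun T =>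
    (ZFSet.sUnion X \ f s) ∪ ZFSet.sep (fun x => x ∈ T) (f s)
  have hΦmem : ∀ T : Set ZFSet, T ⊆ r → T.Nonempty → Φ T ∈ S := by
    intro T hTr ⟨t0, ht0⟩
    have hsub : Φ T ⊆ ZFSet.sUnion X := by
      intro x hx
      rcases ZFSet.mem_union.1 hx with h | h
      · exact (ZFSet.mem_sdiff.1 h).1
      · exact hfs_sub (ZFSet.mem_sep.1 h).1
    refine mem_zPowast.2 ⟨ZFSet.mem_powerset.2 hsub, ?_⟩
    intro z hz
    rcases (hmemX z).1 hz with ⟨q, hqA, rfl⟩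
    by_cases hqs : f q = f s
    · intro hemp
      have ht0' : t0 ∈ Φ T :=
        ZFSet.mem_union.2 (Or.inr (ZFSet.mem_sep.2 ⟨hTr ht0, ht0⟩))
      have : t0 ∈ f q ∩ Φ T := ZFSet.mem_inter.2 ⟨hqs ▸ hTr ht0, ht0'⟩
      rw [hemp] at this; exact ZFSet.notMem_empty _ this
    · have hqne : q ≠ s := fun h => hqs (by rw [h])
      have hdisj : f q ∩ f s = (∅ : ZFSet) :=
        F.disj q (hAP hqA) s (hAP hs) hqne F.xi le_rfl
      rcases ZFSet.eq_empty_or_nonempty (f q) with h0 | ⟨t, ht⟩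
      · exact absurd h0 (F.final_ne q (hAP hqA))
      · intro hemp
        have htns : t ∉ f s := by
          intro hts
          have : t ∈ f q ∩ f s := ZFSet.mem_inter.2 ⟨ht, hts⟩
          rw [hdisj] at this; exact ZFSet.notMem_empty _ this
        have htU : t ∈ ZFSet.sUnion X := ZFSet.mem_sUnion_of_mem ht
          ((hmemX _).2 ⟨q, hqA, rfl⟩)
        have : t ∈ f q ∩ Φ T := ZFSet.mem_inter.2
          ⟨ht, ZFSet.mem_union.2 (Or.inl (ZFSet.mem_sdiff.2 ⟨htU, htns⟩))⟩
        rw [hemp] at this; exact ZFSet.notMem_empty _ this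
  have hΦinj : Set.InjOn Φ {T | T ⊆ r ∧ T.Nonempty} := by
    intro T1 h1 T2 h2 heq
    have key : ∀ T : Set ZFSet, T ⊆ r → ∀ x, x ∈ T ↔ x ∈ Φ T ∧ x ∈ f s := by
      intro T hTr x
      constructor
      · intro hx
        exact ⟨ZFSet.mem_union.2 (Or.inr (ZFSet.mem_sep.2 ⟨hTr hx, hx⟩)), hTr hx⟩
      · rintro ⟨hx, hxs⟩
        rcases ZFSet.mem_union.1 hx with h | h
        · exact absurd hxs (ZFSet.mem_sdiff.1 h).2
        · exact (ZFSet.mem_sep.1 h).2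
    ext x
    rw [key T1 h1.1 x, key T2 h2.1 x, heq]
  -- S is uncountable
  have hSuncount : ¬ S.toSet.Countable := by
    intro hc
    have hmaps : Set.MapsTo Φ {T | T ⊆ r ∧ T.Nonempty} S.toSet := by
      intro T hT; exact hΦmem T hT.1 hT.2
    have hcount1 : {T : Set ZFSet | T ⊆ r ∧ T.Nonempty}.Countable :=
      hmaps.countable_of_injOn hΦinj hc
    have hcount2 : (Set.powerset r).Countable := by
      have : Set.powerset r ⊆ insert (∅ : Set ZFSet) {T | T ⊆ r ∧ T.Nonempty} := by
        intro T hT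
        rcases T.eq_empty_or_nonempty with rfl | hne
        · exact Set.mem_insert _ _
        · exact Set.mem_insert_of_mem _ ⟨hT, hne⟩
      exact (hcount1.insert _).mono this
    have h1 : Cardinal.mk ↥(Set.powerset r) ≤ Cardinal.aleph0 :=
      Cardinal.le_aleph0_iff_set_countable.2 hcount2
    rw [Cardinal.mk_powerset] at h1
    have h2 : Cardinal.aleph0 ≤ Cardinal.mk ↥r := by
      have : Infinite ↥r := hinf.to_subtype
      exact Cardinal.aleph0_le_mk ↥r
    have h3 : Cardinal.mk ↥r < 2 ^ Cardinal.mk ↥r := Cardinal.cantor _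
    exact absurd h3 (not_lt.2 (h1.trans h2))
  -- S is covered by the finitely many final blocks
  have hScover : S.toSet ⊆ ⋃ q ∈ F.P.toSet, (S ∩ F.blk q F.xi).toSet := by
    intro Y hY
    have hYst : Y ∈ F.stage F.xi := hQpow A hAQ hY
    rcases ZFSet.mem_sUnion.1 hYst with ⟨z, hz, hYz⟩
    rcases (mem_zImage (f := fun q => F.blk q F.xi)).1 hz with ⟨q, hqP, rfl⟩
    exact Set.mem_biUnion hqP (by
      show Y ∈ (S ∩ F.blk q F.xi).toSet
      exact ZFSet.mem_inter.2 ⟨hY, hYz⟩)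
  have hg : ∃ g ∈ F.P.toSet, ¬ (S ∩ F.blk g F.xi).toSet.Countable := by
    by_contra hall
    push_neg at hall
    exact hSuncount ((hPfin.countable.biUnion hall).mono hScover)
  rcases hg with ⟨g, hgP, hguncount⟩
  refine ⟨g, hgP, ?_, ?_, hguncount⟩
  · intro hgF
    exact hguncount (((hFred g hgF).2.subset (by
      intro x hx; exact (ZFSet.mem_inter.1 hx).2)).countable)
  · intro hemp
    rw [hemp] at hguncount
    exact hguncount (by rw [show (∅ : ZFSet).toSet = ∅ from ZFSet.coe_empty]; exact Set.countable_empty)
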